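/- Serre functors commute with equivalences (k-linear case): let C and C′ be k-linear categories with right Serre k-functors (S,ψ) and (S′,ψ′) respectively, and let T : C ⥤ C′ be a k-linear functor which is an equivalence of categories. Then the unique natural transformation κ : S ⋙ T ⟶ T ⋙ S′ characterized by ψ′_{T.obj Y, T.obj Y}(T.map f ≫ κ.app Y)(𝟙_{T.obj Y}) = ψ_{Y,Y}(f)(𝟙_Y) for all f : Y ⟶ S.obj Y is an isomorphism of functors; in particular S ⋙ T ≅ T ⋙ S′. -/
import Mathlib

open CategoryTheory

universe w v u v' u'

section Aux

variable (k : Type w) [CommRing k]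
  {C : Type u} [Category.{v} C] [Preadditive C] [CategoryTheory.Linear k C]
  {C' : Type u'} [Category.{v'} C'] [Preadditive C'] [CategoryTheory.Linear k C']
  (S : C ⥤ C) (S' : C' ⥤ C')
  (ψ : ∀ X Y : C, (X ⟶ S.obj Y) ≃ₗ[k] Module.Dual k (Y ⟶ X))
  (ψ' : ∀ X Y : C', (X ⟶ S'.obj Y) ≃ₗ[k] Module.Dual k (Y ⟶ X))
  (T : C ⥤ C') [T.Additive] [T.Linear k] [T.Full] [T.Faithful]

/-- The hom-set bijection induced by a fully faithful k-linear functor, as a linear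
equivalence. -/
noncomputable def auxMapLinearEquiv (A B : C) : (A ⟶ B) ≃ₗ[k] (T.obj A ⟶ T.obj B) where
  toFun := T.map
  map_add' _ _ := T.map_add
  map_smul' r f := T.map_smul r f
  invFun := T.preimage
  left_inv := T.preimage_map
  right_inv := T.map_preimage

/-- The functional `g ↦ ψ Y Y (T.preimage g) (𝟙 Y)`. -/
noncomputable def auxφ (Y : C) : Module.Dual k (T.obj Y ⟶ T.obj (S.obj Y)) :=
  (LinearMap.applyₗ (𝟙 Y)).comp ((ψ Y Y).toLinearMap.comp
    (auxMapLinearEquiv k T Y (S.obj Y)).symm.toLinearMap)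

/-- The component of the comparison transformation. -/
noncomputable def auxκapp (Y : C) : T.obj (S.obj Y) ⟶ S'.obj (T.obj Y) :=
  (ψ' (T.obj (S.obj Y)) (T.obj Y)).symm (auxφ k S ψ T Y)

lemma auxκapp_spec (Y : C) (g : T.obj Y ⟶ T.obj (S.obj Y)) :
    ψ' (T.obj (S.obj Y)) (T.obj Y) (auxκapp k S S' ψ ψ' T Y) g
      = ψ Y Y (T.preimage g) (𝟙 Y) := by
  rw [auxκapp, LinearEquiv.apply_symm_apply]
  rfl

/-- The linear equivalence `(T.obj Y ⟶ W') ≃ₗ (Y ⟶ W)` coming from an iso `T.obj W ≅ W'`. -/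
noncomputable def auxHomEquiv (Y W : C) (W' : C') (e : T.obj W ≅ W') :
    (T.obj Y ⟶ W') ≃ₗ[k] (Y ⟶ W) where
  toFun z := T.preimage (z ≫ e.inv)
  map_add' a b := T.map_injective (by simp)
  map_smul' r a := T.map_injective (by simp [Functor.map_smul])
  invFun h := T.map h ≫ e.hom
  left_inv z := by simp
  right_inv h := by simp

/-- The composite linear equivalence `(W ⟶ S.obj Y) ≃ₗ (W' ⟶ S'.obj (T.obj Y))`. -/
noncomputable def auxFeq (Y W : C) (W' : C') (e : T.obj W ≅ W') :
    (W ⟶ S.obj Y) ≃ₗ[k] (W' ⟶ S'.obj (T.obj Y)) :=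
  (ψ W Y).trans (((auxHomEquiv k T Y W W' e).dualMap).trans
    (ψ' W' (T.obj Y)).symm)

end Aux

/-- Serre functors commute with equivalences (k-linear case): for right Serre k-functors
`(S, ψ)` on `C` and `(S', ψ')` on `C'` and a k-linear equivalence `T : C ⥤ C'`, the unique
natural transformation `κ : S ⋙ T ⟶ T ⋙ S'` characterized by
`ψ' (T.map f ≫ κ.app Y) (𝟙) = ψ f (𝟙)` is an isomorphism of functors. -/
theorem rightSerre_linear_commutes_with_equivalence
    (k : Type w) [CommRing k]
    {C : Type u} [Category.{v} C] [Preadditive C] [CategoryTheory.Linear k C]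
    {C' : Type u'} [Category.{v'} C'] [Preadditive C'] [CategoryTheory.Linear k C']
    (S : C ⥤ C) [S.Additive] [S.Linear k] (S' : C' ⥤ C') [S'.Additive] [S'.Linear k]
    (ψ : ∀ X Y : C, (X ⟶ S.obj Y) ≃ₗ[k] Module.Dual k (Y ⟶ X))
    (ψ' : ∀ X Y : C', (X ⟶ S'.obj Y) ≃ₗ[k] Module.Dual k (Y ⟶ X))
    (hnat₁ : ∀ (X Z Y : C) (x : Z ⟶ X) (f : X ⟶ S.obj Y) (z : Y ⟶ Z),
        ψ Z Y (x ≫ f) z = ψ X Y f (z ≫ x))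
    (hnat₂ : ∀ (X Y Z : C) (y : Y ⟶ Z) (f : X ⟶ S.obj Y) (h : Z ⟶ X),
        ψ X Z (f ≫ S.map y) h = ψ X Y f (y ≫ h))
    (hnat₁' : ∀ (X Z Y : C') (x : Z ⟶ X) (f : X ⟶ S'.obj Y) (z : Y ⟶ Z),
        ψ' Z Y (x ≫ f) z = ψ' X Y f (z ≫ x))
    (hnat₂' : ∀ (X Y Z : C') (y : Y ⟶ Z) (f : X ⟶ S'.obj Y) (h : Z ⟶ X),
        ψ' X Z (f ≫ S'.map y) h = ψ' X Y f (y ≫ h))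
    (T : C ⥤ C') [T.Additive] [T.Linear k] [T.IsEquivalence] :
    ∃ κ : S ⋙ T ⟶ T ⋙ S',
      (∀ (Y : C) (f : Y ⟶ S.obj Y),
          ψ' (T.obj Y) (T.obj Y) (T.map f ≫ κ.app Y) (𝟙 (T.obj Y)) = ψ Y Y f (𝟙 Y)) ∧
      (∀ κ' : S ⋙ T ⟶ T ⋙ S',
          (∀ (Y : C) (f : Y ⟶ S.obj Y),
            ψ' (T.obj Y) (T.obj Y) (T.map f ≫ κ'.app Y) (𝟙 (T.obj Y)) = ψ Y Y f (𝟙 Y)) →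
          κ' = κ) ∧
      IsIso κ := by
  -- naturality of the components
  have hnatκ : ∀ {Y Z : C} (w : Y ⟶ Z),
      T.map (S.map w) ≫ auxκapp k S S' ψ ψ' T Z
        = auxκapp k S S' ψ ψ' T Y ≫ S'.map (T.map w) := by
    intro Y Z w
    apply (ψ' (T.obj (S.obj Y)) (T.obj Z)).injective
    ext h
    have hh : h = T.map (T.preimage h) := (T.map_preimage h).symm
    rw [hnat₁', hnat₂', hh, ← T.map_comp, ← T.map_comp, auxκapp_spec, auxκapp_spec,
      T.preimage_map, T.preimage_map, hnat₂, hnat₁, Category.id_comp, Category.comp_id]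
  refine ⟨{ app := fun Y => auxκapp k S S' ψ ψ' T Y,
            naturality := fun Y Z w => hnatκ w }, ?_, ?_, ?_⟩
  · intro Y f
    rw [hnat₁', Category.id_comp, auxκapp_spec, T.preimage_map]
  · intro κ' hκ'
    ext Y
    apply (ψ' (T.obj (S.obj Y)) (T.obj Y)).injective
    ext g
    rw [auxκapp_spec]
    conv_lhs => rw [show g = T.map (T.preimage g) from (T.map_preimage g).symm]
    rw [← Category.id_comp (T.map (T.preimage g)), ← hnat₁', hκ' Y (T.preimage g)]
  · have hiso : ∀ Y : C, IsIso (auxκapp k S S' ψ ψ' T Y) := by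
      intro Y
      apply isIso_of_yoneda_map_bijective
      intro W'
      set W : C := T.objPreimage W' with hW
      set e : T.obj W ≅ W' := T.objObjPreimageIso W' with he
      have hFeq : ∀ x₀ : W ⟶ S.obj Y,
          auxFeq k S S' ψ ψ' T Y W W' e x₀
            = e.inv ≫ T.map x₀ ≫ auxκapp k S S' ψ ψ' T Y := by
        intro x₀
        apply (ψ' W' (T.obj Y)).injective
        ext z
        rw [auxFeq]
        simp only [LinearEquiv.trans_apply, LinearEquiv.apply_symm_apply,
          LinearEquiv.dualMap_apply]
        have huneq : (auxHomEquiv k T Y W W' e) z = T.preimage (z ≫ e.inv) := rfl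
        rw [huneq, ← Category.assoc, hnat₁', auxκapp_spec]
        have hz : z ≫ e.inv ≫ T.map x₀ = T.map (T.preimage (z ≫ e.inv) ≫ x₀) := by
          rw [T.map_comp, T.map_preimage, Category.assoc]
        rw [hz, T.preimage_map, hnat₁, Category.id_comp]
      have hp : Function.Bijective
          (fun x : W' ⟶ T.obj (S.obj Y) => T.preimage (e.hom ≫ x)) :=
        (Equiv.mk (fun x : W' ⟶ T.obj (S.obj Y) => T.preimage (e.hom ≫ x))
          (fun x₀ : W ⟶ S.obj Y => e.inv ≫ T.map x₀)
          (fun x => by simp) (fun x₀ => by simp)).bijective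
      have hcomp : (fun x : W' ⟶ T.obj (S.obj Y) => x ≫ auxκapp k S S' ψ ψ' T Y)
          = (auxFeq k S S' ψ ψ' T Y W W' e : (W ⟶ S.obj Y) → (W' ⟶ S'.obj (T.obj Y)))
            ∘ (fun x => T.preimage (e.hom ≫ x)) := by
        funext x
        simp only [Function.comp_apply, hFeq, T.map_preimage]
        simp
      rw [hcomp]
      exact ((auxFeq k S S' ψ ψ' T Y W W' e).bijective).comp hp
    exact NatIso.isIso_of_isIso_app _
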